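/- Let F + A be ρ-comonotone (⟨u - u', z - z'⟩ ≥ ρ‖u - u'‖² for all (z,u),(z',u') in the graph of F+A) with 0 ∈ F(z*)+A(z*) and ρ/η ≥ -1/4 for some η > 0. Then for any z with u ∈ F(z)+A(z), writing w = ηu: ⟨w, z - z*⟩ ≥ -(1/4)‖w‖², and consequently for any t ≥ 1 and any z₀: (t(t+1)/2)‖w‖² + t⟨w, z - z₀⟩ ≥ (t(t+1/2)/4)‖w‖² - ‖z* - z₀‖². -/
import Mathlib


open scoped RealInnerProductSpace

theorem stmt_19 (n : ℕ)
    (F : EuclideanSpace ℝ (Fin n) → EuclideanSpace ℝ (Fin n))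
    (A : EuclideanSpace ℝ (Fin n) → Set (EuclideanSpace ℝ (Fin n)))
    (ρ η : ℝ) (hρ : ρ ≤ 0) (hη : 0 < η) (hρη : ρ / η ≥ -1 / 4)
    (hcomono : ∀ z z' u u' : EuclideanSpace ℝ (Fin n),
      u - F z ∈ A z → u' - F z' ∈ A z' →
        ⟪u - u', z - z'⟫ ≥ ρ * ‖u - u'‖ ^ 2)
    (zstar : EuclideanSpace ℝ (Fin n)) (hzstar : -F zstar ∈ A zstar) :
    ∀ z u : EuclideanSpace ℝ (Fin n), u - F z ∈ A z →
      (⟪η • u, z - zstar⟫ ≥ -(1 / 4) * ‖η • u‖ ^ 2) ∧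
      (∀ t : ℝ, 1 ≤ t → ∀ z₀ : EuclideanSpace ℝ (Fin n),
        (t * (t + 1) / 2) * ‖η • u‖ ^ 2 + t * ⟪η • u, z - z₀⟫ ≥
          (t * (t + 1 / 2) / 4) * ‖η • u‖ ^ 2 - ‖zstar - z₀‖ ^ 2) := by
  intro z u hu
  have h0 : (0 : EuclideanSpace ℝ (Fin n)) - F zstar ∈ A zstar := by
    simpa using hzstar
  have h1 := hcomono z zstar u 0 hu h0
  simp only [sub_zero] at h1
  have hw : ‖η • u‖ ^ 2 = η ^ 2 * ‖u‖ ^ 2 := by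
    rw [norm_smul]
    simp [abs_of_pos hη]
    ring
  have hinner : ∀ v : EuclideanSpace ℝ (Fin n), ⟪η • u, v⟫ = η * ⟪u, v⟫ := by
    intro v; exact real_inner_smul_left u v η
  have hρ' : ρ ≥ -1 / 4 * η := by
    have := (le_div_iff₀ hη).mp hρη
    linarith
  have key : ⟪η • u, z - zstar⟫ ≥ -(1 / 4) * ‖η • u‖ ^ 2 := by
    rw [hinner, hw]
    nlinarith [sq_nonneg ‖u‖, mul_le_mul_of_nonneg_left h1 hη.le]
  refine ⟨key, ?_⟩
  intro t ht z₀
  have hsplit : ⟪η • u, z - z₀⟫ = ⟪η • u, z - zstar⟫ + ⟪η • u, zstar - z₀⟫ := by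
    rw [← inner_add_right]
    congr 1
    abel
  have hcs : ⟪η • u, zstar - z₀⟫ ≥ -(‖η • u‖ * ‖zstar - z₀‖) :=
    neg_le_of_abs_le (abs_real_inner_le_norm (η • u) (zstar - z₀))
  have hnn : (0:ℝ) ≤ ‖η • u‖ := norm_nonneg _
  have hnn2 : (0:ℝ) ≤ ‖zstar - z₀‖ := norm_nonneg _
  rw [hsplit]
  nlinarith [sq_nonneg (t * ‖η • u‖ - 2 * ‖zstar - z₀‖), sq_nonneg ‖η • u‖,
    mul_le_mul_of_nonneg_left hcs (le_trans zero_le_one ht),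
    mul_le_mul_of_nonneg_left key (le_trans zero_le_one ht)]
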